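/- Let a_0, a_1, a_2, ... be i.i.d. complex random variables with ℙ(a_0 = 0) = 0 and |a_0| not almost surely constant. Suppose the distribution of |a_0| is absolutely continuous with respect to Lebesgue measure on [0,∞) with density g, and that g(t) ~ α t as t → 0+ for some α > 0 (i.e. g(t)/t → α). Then for every integer n ≥ 1, the largest root modulus x_n^(n) of P_n(z) = ∑_{k=0}^n a_k z^k satisfies 𝔼[(x_n^(n))^2] = ∞. -/

import Mathlib

open MeasureTheory ProbabilityTheory Polynomial Filter
open scoped ENNReal

/-- The random Kac polynomial `P_n(z) = ∑_{k=0}^n a_k z^k`. -/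
noncomputable def kacPoly {Ω : Type*} (a : ℕ → Ω → ℂ) (n : ℕ) (ω : Ω) : Polynomial ℂ :=
  ∑ k ∈ Finset.range (n + 1), Polynomial.C (a k ω) * Polynomial.X ^ k

/-- The smallest modulus of a root of a complex polynomial. -/
noncomputable def minRootMod (p : Polynomial ℂ) : ℝ :=
  sInf ((fun z : ℂ => ‖z‖) '' {z : ℂ | z ∈ p.roots})

/-- The largest modulus of a root of a complex polynomial. -/
noncomputable def maxRootMod (p : Polynomial ℂ) : ℝ :=
  sSup ((fun z : ℂ => ‖z‖) '' {z : ℂ | z ∈ p.roots})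

lemma kacPoly_coeff {Ω : Type*} (a : ℕ → Ω → ℂ) (n : ℕ) (ω : Ω) (j : ℕ) :
    (kacPoly a n ω).coeff j = if j ≤ n then a j ω else 0 := by
  unfold kacPoly
  rw [Polynomial.finset_sum_coeff]
  simp only [Polynomial.coeff_C_mul, Polynomial.coeff_X_pow, mul_ite, mul_one, mul_zero]
  rw [Finset.sum_ite_eq (Finset.range (n+1)) j (fun k => a k ω)]
  simp [Finset.mem_range, Nat.lt_succ_iff]

lemma kacPoly_natDegree {Ω : Type*} (a : ℕ → Ω → ℂ) (n : ℕ) (ω : Ω)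
    (h : a n ω ≠ 0) : (kacPoly a n ω).natDegree = n := by
  apply le_antisymm
  · apply Polynomial.natDegree_le_iff_coeff_eq_zero.2
    intro m hm
    rw [kacPoly_coeff]
    simp [Nat.not_le.2 hm, Nat.le_of_lt hm, not_le_of_gt hm]
  · apply Polynomial.le_natDegree_of_ne_zero
    rw [kacPoly_coeff]; simpa using h

lemma rootBound {Ω : Type*} (a : ℕ → Ω → ℂ) (n : ℕ) (ω : Ω) (hn : 1 ≤ n)
    (h : a n ω ≠ 0) :
    ‖a (n-1) ω‖ ≤ (n : ℝ) * ‖a n ω‖ * maxRootMod (kacPoly a n ω) := by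
  set p := kacPoly a n ω with hp
  have hdeg : p.natDegree = n := kacPoly_natDegree a n ω h
  have hp0 : p ≠ 0 := fun h0 => by
    apply h; have := kacPoly_coeff a n ω n; rw [← hp, h0] at this; simpa using this.symm
  set q := Polynomial.C (a n ω)⁻¹ * p with hq
  have hlead : p.leadingCoeff = a n ω := by
    rw [Polynomial.leadingCoeff, hdeg, hp, kacPoly_coeff]; simp
  have hqmonic : q.Monic := by
    rw [Polynomial.Monic, hq, Polynomial.leadingCoeff_mul, Polynomial.leadingCoeff_C, hlead,
      inv_mul_cancel₀ h]
  have hqdeg : q.natDegree = n := by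
    rw [hq, Polynomial.natDegree_C_mul (inv_ne_zero h), hdeg]
  have hsplits : q.Splits := IsAlgClosed.splits q
  have hroots : q.roots = p.roots := Polynomial.roots_C_mul p (inv_ne_zero h)
  have hcard : p.roots.card = n := by
    rw [← hroots, Polynomial.splits_iff_card_roots.1 hsplits, hqdeg]
  have hnext : q.nextCoeff = (a n ω)⁻¹ * a (n-1) ω := by
    rw [Polynomial.nextCoeff_of_natDegree_pos (by omega : 0 < q.natDegree), hqdeg, hq,
      Polynomial.coeff_C_mul, hp, kacPoly_coeff]
    simp [Nat.sub_le]
  have hsum : p.roots.sum = -((a n ω)⁻¹ * a (n-1) ω) := by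
    rw [← hroots, ← hnext,
      hsplits.nextCoeff_eq_neg_sum_roots_of_monic hqmonic]
    ring
  -- the set of root moduli is finite, nonempty, bounded above
  set S := (fun z : ℂ => ‖z‖) '' {z : ℂ | z ∈ p.roots} with hS
  have hSfin : S.Finite := by
    apply Set.Finite.image
    have : {z : ℂ | z ∈ p.roots} = ↑p.roots.toFinset := by
      ext z; simp [Multiset.mem_toFinset]
    rw [this]; exact (p.roots.toFinset : Finset ℂ).finite_toSet
  have hbdd : BddAbove S := hSfin.bddAbove
  have hM : ∀ z ∈ p.roots, ‖z‖ ≤ maxRootMod p :=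
    fun z hz => le_csSup hbdd ⟨z, hz, rfl⟩
  have habs : ‖p.roots.sum‖ ≤ (n : ℝ) * maxRootMod p := by
    calc ‖p.roots.sum‖ ≤ (p.roots.map (fun z : ℂ => ‖z‖)).sum := by
          exact norm_multiset_sum_le p.roots
      _ ≤ Multiset.card (p.roots.map (fun z : ℂ => ‖z‖)) • maxRootMod p := by
          apply Multiset.sum_le_card_nsmul
          intro x hx
          obtain ⟨z, hz, rfl⟩ := Multiset.mem_map.1 hx
          exact hM z hz
      _ = (n : ℝ) * maxRootMod p := by
          rw [Multiset.card_map, hcard, nsmul_eq_mul]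
  rw [hsum] at habs
  have habs2 : ‖a (n-1) ω‖ / ‖a n ω‖ ≤ (n : ℝ) * maxRootMod p := by
    rw [div_eq_inv_mul, ← norm_inv, ← norm_mul]
    simpa using habs
  have hpos : 0 < ‖a n ω‖ := by
    exact norm_pos_iff.2 h
  rw [div_le_iff₀ hpos] at habs2
  calc ‖a (n-1) ω‖ ≤ (n : ℝ) * maxRootMod p * ‖a n ω‖ := habs2
    _ = (n : ℝ) * ‖a n ω‖ * maxRootMod p := by ring

lemma invMomentTop {Ω : Type*} [MeasurableSpace Ω] (μ : Measure Ω) [IsProbabilityMeasure μ]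
    (b : Ω → ℂ) (hb : Measurable b) (h0 : μ {ω | b ω = 0} = 0)
    (g : ℝ → ℝ) (hgnonneg : ∀ t, 0 ≤ g t)
    (hdens : ∀ t : ℝ, 0 ≤ t →
      (μ {ω | ‖b ω‖ ≤ t}).toReal = ∫ s in (0 : ℝ)..t, g s)
    (α : ℝ) (hα : 0 < α)
    (hequiv : Filter.Tendsto (fun t => g t / t) (nhdsWithin 0 (Set.Ioi 0)) (nhds α)) :
    ∫⁻ ω, ENNReal.ofReal ((‖b ω‖)⁻¹ ^ 2) ∂μ = ⊤ := by
  -- Step 1: a linear lower bound on g near 0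
  have hev : ∀ᶠ t in nhdsWithin 0 (Set.Ioi 0), α/2 < g t / t :=
    hequiv.eventually_const_lt (by linarith)
  rw [eventually_nhdsWithin_iff, Metric.eventually_nhds_iff] at hev
  obtain ⟨δ, hδpos, hδ⟩ := hev
  have hg' : ∀ t : ℝ, 0 < t → t < δ → α/2 * t ≤ g t := by
    intro t ht htδ
    have hd : dist t (0:ℝ) < δ := by
      rw [Real.dist_eq, sub_zero, abs_of_pos ht]; exact htδ
    exact ((lt_div_iff₀ ht).mp (hδ hd ht)).le
  -- Step 2: some tail measure is positive; g is interval integrable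
  have hEx : ∃ k : ℕ, μ {ω | ‖b ω‖ ≤ (k:ℝ)} ≠ 0 := by
    by_contra hc
    push_neg at hc
    have hU : (Set.univ : Set Ω) ⊆ ⋃ k : ℕ, {ω | ‖b ω‖ ≤ (k:ℝ)} := by
      intro ω _
      exact Set.mem_iUnion.2 ⟨⌈‖b ω‖⌉₊, by simpa using Nat.le_ceil (‖b ω‖)⟩
    have : μ Set.univ = 0 := measure_mono_null hU (measure_iUnion_null hc)
    simp [measure_univ] at this
  obtain ⟨k, hk⟩ := hEx
  set T : ℝ := max (k : ℝ) δ with hT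
  have hTδ : δ ≤ T := le_max_right _ _
  have hTpos : 0 < T := lt_of_lt_of_le hδpos hTδ
  have hμT : μ {ω | ‖b ω‖ ≤ T} ≠ 0 := by
    intro hz
    have hsub : {ω | ‖b ω‖ ≤ (k:ℝ)} ⊆ {ω | ‖b ω‖ ≤ T} :=
      fun ω hω => by simp only [Set.mem_setOf_eq, hT]; exact le_trans hω (le_max_left _ _)
    exact hk (measure_mono_null hsub hz)
  have hFT : (0:ℝ) < (μ {ω | ‖b ω‖ ≤ T}).toReal :=
    ENNReal.toReal_pos hμT (measure_ne_top μ _)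
  have hgint : IntervalIntegrable g MeasureTheory.volume 0 T := by
    by_contra hni
    rw [hdens T hTpos.le, intervalIntegral.integral_undef hni] at hFT
    exact lt_irrefl 0 hFT
  -- Step 3: lower bound on the CDF near 0
  set δ' : ℝ := min δ T with hδ'
  have hδ'pos : 0 < δ' := lt_min hδpos hTpos
  have hCDF : ∀ u : ℝ, 0 < u → u < δ' →
      ENNReal.ofReal (α * u^2 / 4) ≤ μ {ω | ‖b ω‖ ≤ u} := by
    intro u hu0 huδ
    have huT : u ≤ T := le_of_lt (lt_of_lt_of_le huδ (min_le_right _ _))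
    have hgu : IntervalIntegrable g MeasureTheory.volume 0 u := by
      apply hgint.mono_set
      apply Set.uIcc_subset_uIcc
      · exact Set.mem_uIcc.2 (Or.inl ⟨le_refl 0, hTpos.le⟩)
      · exact Set.mem_uIcc.2 (Or.inl ⟨hu0.le, huT⟩)
    have hlin : IntervalIntegrable (fun s => α/2 * s) MeasureTheory.volume 0 u :=
      (continuous_const.mul continuous_id).intervalIntegrable 0 u
    have hmono : ∫ s in (0:ℝ)..u, α/2 * s ≤ ∫ s in (0:ℝ)..u, g s := by
      apply intervalIntegral.integral_mono_on hu0.le hlin hgu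
      intro s hs
      rcases eq_or_lt_of_le hs.1 with h|h
      · simpa [← h] using hgnonneg 0
      · exact hg' s h (lt_of_le_of_lt hs.2 (lt_of_lt_of_le huδ (min_le_left _ _)))
    have hval : ∫ s in (0:ℝ)..u, α/2 * s = α * u^2 / 4 := by
      rw [intervalIntegral.integral_const_mul, integral_id]
      ring
    apply ENNReal.ofReal_le_of_le_toReal
    rw [hdens u hu0.le]
    linarith [hmono, hval.symm.le]
  -- Step 4: layer cake
  set f : Ω → ℝ := fun ω => (‖b ω‖)⁻¹ ^ 2 with hf
  have hfmeas : Measurable f := by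
    apply Measurable.pow_const
    exact (continuous_norm.measurable.comp hb).inv
  have hfnn : 0 ≤ᵐ[μ] f := ae_of_all _ (fun ω => by positivity)
  rw [lintegral_eq_lintegral_meas_lt μ hfnn hfmeas.aemeasurable]
  -- Step 5: tail lower bound
  set T₀ : ℝ := (δ')⁻¹ ^ 2 with hT₀
  have hT₀pos : 0 < T₀ := by positivity
  have htail : ∀ t : ℝ, t ∈ Set.Ioi T₀ →
      ENNReal.ofReal (α / 16 * t⁻¹) ≤ μ {ω | t < f ω} := by
    intro t ht
    rw [Set.mem_Ioi] at ht
    have htpos : 0 < t := lt_trans hT₀pos ht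
    set u : ℝ := (2 * Real.sqrt t)⁻¹ with hu
    have hsq : 0 < Real.sqrt t := Real.sqrt_pos.2 htpos
    have hupos : 0 < u := by positivity
    have hsqrtT : (δ')⁻¹ < Real.sqrt t := by
      have : Real.sqrt T₀ < Real.sqrt t := Real.sqrt_lt_sqrt hT₀pos.le ht
      rwa [hT₀, Real.sqrt_sq (by positivity)] at this
    have huδ' : u < δ' := by
      rw [hu]
      rw [inv_lt_comm₀ (by positivity) hδ'pos]
      calc (δ')⁻¹ < Real.sqrt t := hsqrtT
        _ ≤ 2 * Real.sqrt t := by linarith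
    have hincl : {ω | ‖b ω‖ ≤ u} ⊆ {ω | t < f ω} ∪ {ω | b ω = 0} := by
      intro ω hω
      rcases eq_or_ne (b ω) 0 with hz|hz
      · exact Or.inr hz
      · left
        have hr : 0 < ‖b ω‖ := by exact norm_pos_iff.2 hz
        have h1 : 2 * Real.sqrt t ≤ (‖b ω‖)⁻¹ := by
          have := inv_anti₀ hr hω
          rwa [hu, inv_inv] at this
        have h2 : (2 * Real.sqrt t)^2 ≤ ((‖b ω‖)⁻¹)^2 :=
          pow_le_pow_left₀ (by positivity) h1 2
        have h3 : (2 * Real.sqrt t)^2 = 4 * t := by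
          rw [mul_pow, Real.sq_sqrt htpos.le]; norm_num
        show t < f ω
        rw [hf]
        calc t < 4 * t := by linarith
          _ ≤ (‖b ω‖)⁻¹ ^ 2 := by rw [← h3]; exact h2
    have hμle : μ {ω | ‖b ω‖ ≤ u} ≤ μ {ω | t < f ω} := by
      calc μ {ω | ‖b ω‖ ≤ u} ≤ μ ({ω | t < f ω} ∪ {ω | b ω = 0}) :=
            measure_mono hincl
        _ ≤ μ {ω | t < f ω} + μ {ω | b ω = 0} := measure_union_le _ _
        _ = μ {ω | t < f ω} := by rw [h0, add_zero]
    have hval : α / 16 * t⁻¹ = α * u^2 / 4 := by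
      have husq : u^2 = (4*t)⁻¹ := by
        rw [hu, inv_pow, mul_pow, Real.sq_sqrt htpos.le]; norm_num
      rw [husq, mul_inv]
      ring
    rw [hval]
    exact le_trans (hCDF u hupos huδ') hμle
  -- Step 6: the tail integral diverges
  have hdiv : ∫⁻ t in Set.Ioi T₀, ENNReal.ofReal (α / 16 * t⁻¹) = ⊤ := by
    by_contra hne
    have hint : IntegrableOn (fun t : ℝ => α / 16 * t⁻¹) (Set.Ioi T₀) := by
      constructor
      · exact (measurable_const.mul measurable_inv).aestronglyMeasurable
      · rw [MeasureTheory.hasFiniteIntegral_iff_norm]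
        have heq : ∫⁻ t in Set.Ioi T₀, ENNReal.ofReal ‖α / 16 * t⁻¹‖ =
            ∫⁻ t in Set.Ioi T₀, ENNReal.ofReal (α / 16 * t⁻¹) := by
          apply lintegral_congr_ae
          filter_upwards [ae_restrict_mem measurableSet_Ioi] with t ht
          have htpos : 0 < t := lt_trans hT₀pos ht
          rw [Real.norm_eq_abs, abs_of_nonneg (by positivity)]
        rw [heq]
        exact lt_top_iff_ne_top.2 hne
    have hinv : IntegrableOn (fun t : ℝ => t⁻¹) (Set.Ioi T₀) := by
      have h2 : IntegrableOn (fun x : ℝ => 16 / α * (α / 16 * x⁻¹)) (Set.Ioi T₀) :=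
        hint.const_mul (16 / α)
      apply h2.congr_fun _ measurableSet_Ioi
      intro t _
      have hc : (16:ℝ)/α * (α/16) = 1 := by field_simp
      show 16 / α * (α / 16 * t⁻¹) = t⁻¹
      rw [← mul_assoc, hc, one_mul]
    have hrpow : IntegrableOn (fun t : ℝ => t ^ (-1 : ℝ)) (Set.Ioi T₀) := by
      apply hinv.congr_fun _ measurableSet_Ioi
      intro t ht
      exact (Real.rpow_neg_one t).symm
    have := (integrableOn_Ioi_rpow_iff hT₀pos).1 hrpow
    linarith
  rw [eq_top_iff, ← hdiv]
  calc ∫⁻ t in Set.Ioi T₀, ENNReal.ofReal (α / 16 * t⁻¹)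
      ≤ ∫⁻ t in Set.Ioi T₀, μ {ω | t < f ω} := by
        apply lintegral_mono_ae
        filter_upwards [ae_restrict_mem measurableSet_Ioi] with t ht
        exact htail t ht
    _ ≤ ∫⁻ t in Set.Ioi 0, μ {ω | t < f ω} :=
        lintegral_mono_set (Set.Ioi_subset_Ioi hT₀pos.le)

/-- For i.i.d. complex coefficients with `ℙ(a₀ = 0) = 0`, `|a₀|` not a.s.
constant, and `|a₀|` having a density `g` on `[0,∞)` (`ℙ(|a₀| ≤ t) = ∫₀ᵗ g`) with
`g(t) ~ α t` as `t → 0⁺` for some `α > 0`, the largest root modulus of `P_n` has infinite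
second moment for every `n ≥ 1`. -/
theorem maxRootMod_infinite_second_moment_of_density_linear_at_zero
    {Ω : Type*} [MeasurableSpace Ω] (μ : Measure Ω) [IsProbabilityMeasure μ]
    (a : ℕ → Ω → ℂ) (hmeas : ∀ k, Measurable (a k))
    (hindep : iIndepFun a μ)
    (hid : ∀ k, IdentDistrib (a k) (a 0) μ μ)
    (hnc : ¬ ∃ c : ℝ, 0 ≤ c ∧ μ {ω | ‖a 0 ω‖ = c} = 1)
    (h0 : μ {ω | a 0 ω = 0} = 0)
    (g : ℝ → ℝ) (hgmeas : Measurable g) (hgnonneg : ∀ t, 0 ≤ g t)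
    (hdens : ∀ t : ℝ, 0 ≤ t →
      (μ {ω | ‖a 0 ω‖ ≤ t}).toReal = ∫ s in (0 : ℝ)..t, g s)
    (α : ℝ) (hα : 0 < α)
    (hequiv : Filter.Tendsto (fun t => g t / t) (nhdsWithin 0 (Set.Ioi 0)) (nhds α)) :
    ∀ n : ℕ, 1 ≤ n →
      ∫⁻ ω, ENNReal.ofReal (maxRootMod (kacPoly a n ω) ^ 2) ∂μ = ⊤ := by
  intro n hn
  have hne : n - 1 ≠ n := by omega
  set X : Ω → ℝ≥0∞ := fun ω => ENNReal.ofReal (‖a (n-1) ω‖ ^ 2) with hX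
  set Y : Ω → ℝ≥0∞ :=
    fun ω => ENNReal.ofReal (((n:ℝ)⁻¹ * (‖a n ω‖)⁻¹) ^ 2) with hY
  have habsmeas : Measurable (fun z : ℂ => ‖z‖) := continuous_norm.measurable
  have hφ : Measurable (fun z : ℂ => ENNReal.ofReal (‖z‖ ^ 2)) :=
    ENNReal.measurable_ofReal.comp ((habsmeas.pow_const 2))
  have hψ : Measurable
      (fun z : ℂ => ENNReal.ofReal (((n:ℝ)⁻¹ * (‖z‖)⁻¹) ^ 2)) :=
    ENNReal.measurable_ofReal.comp (((measurable_const.mul habsmeas.inv).pow_const 2))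
  have hXmeas : Measurable X := hφ.comp (hmeas (n-1))
  have hYmeas : Measurable Y := hψ.comp (hmeas n)
  have hindepXY : IndepFun X Y μ :=
    (hindep.indepFun hne).comp hφ hψ
  have hXY : ∫⁻ ω, X ω * Y ω ∂μ = (∫⁻ ω, X ω ∂μ) * ∫⁻ ω, Y ω ∂μ := by
    have := ProbabilityTheory.lintegral_mul_eq_lintegral_mul_lintegral_of_indepFun
      hXmeas hYmeas hindepXY
    simpa [Pi.mul_apply] using this
  -- ∫⁻ Y = ⊤
  have hμ0 : ∀ k : ℕ, μ {ω | a k ω = 0} = 0 := by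
    intro k
    have := (hid k).measure_mem_eq (MeasurableSet.singleton (0:ℂ))
    have h1 : a k ⁻¹' {0} = {ω | a k ω = 0} := rfl
    have h2 : a 0 ⁻¹' {0} = {ω | a 0 ω = 0} := rfl
    rw [h1, h2] at this
    rw [this, h0]
  have hinv0 : ∫⁻ ω, ENNReal.ofReal ((‖a 0 ω‖)⁻¹ ^ 2) ∂μ = ⊤ :=
    invMomentTop μ (a 0) (hmeas 0) h0 g hgnonneg hdens α hα hequiv
  have hinvn : ∫⁻ ω, ENNReal.ofReal ((‖a n ω‖)⁻¹ ^ 2) ∂μ = ⊤ := by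
    have hmble : Measurable (fun z : ℂ => ENNReal.ofReal ((‖z‖)⁻¹ ^ 2)) :=
      ENNReal.measurable_ofReal.comp (habsmeas.inv.pow_const 2)
    have := ((hid n).comp hmble).lintegral_eq
    simpa using this.trans hinv0
  have hYtop : ∫⁻ ω, Y ω ∂μ = ⊤ := by
    have hYeq : ∀ ω, Y ω =
        ENNReal.ofReal (((n:ℝ)⁻¹) ^ 2) * ENNReal.ofReal ((‖a n ω‖)⁻¹ ^ 2) := by
      intro ω
      show ENNReal.ofReal (((n:ℝ)⁻¹ * (‖a n ω‖)⁻¹) ^ 2) = _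
      rw [mul_pow, ENNReal.ofReal_mul (by positivity)]
    simp only [hYeq]
    rw [lintegral_const_mul' _ _ ENNReal.ofReal_ne_top, hinvn]
    apply ENNReal.mul_top
    have hnR : (0:ℝ) < (n:ℝ) := by
      have : 0 < n := hn
      exact_mod_cast this
    have hnpos : (0:ℝ) < ((n:ℝ)⁻¹) ^ 2 := pow_pos (inv_pos.2 hnR) 2
    exact (ENNReal.ofReal_pos.2 hnpos).ne'
  -- ∫⁻ X > 0
  have hXpos : ∫⁻ ω, X ω ∂μ ≠ 0 := by
    have : 0 < ∫⁻ ω, X ω ∂μ := by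
      rw [lintegral_pos_iff_support hXmeas]
      have hsub : {ω | a (n-1) ω ≠ 0} ⊆ Function.support X := by
        intro ω hω
        simp only [Function.mem_support, hX, ne_eq, ENNReal.ofReal_eq_zero, not_le]
        have : ‖a (n-1) ω‖ ≠ 0 := by
          simpa using hω
        positivity
      have hms : MeasurableSet {ω | a (n-1) ω = 0} :=
        (hmeas (n-1)) (MeasurableSet.singleton 0)
      have hcompl : μ {ω | a (n-1) ω ≠ 0} = 1 := by
        have : {ω | a (n-1) ω ≠ 0} = {ω | a (n-1) ω = 0}ᶜ := rfl
        rw [this, measure_compl hms (measure_ne_top μ _), hμ0 (n-1), measure_univ, tsub_zero]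
      calc (0:ℝ≥0∞) < 1 := by norm_num
        _ = μ {ω | a (n-1) ω ≠ 0} := hcompl.symm
        _ ≤ μ (Function.support X) := measure_mono hsub
    exact this.ne'
  -- a.e. pointwise bound
  have hae : ∀ᵐ ω ∂μ, X ω * Y ω ≤ ENNReal.ofReal (maxRootMod (kacPoly a n ω) ^ 2) := by
    have hann : ∀ᵐ ω ∂μ, a n ω ≠ 0 := by
      rw [ae_iff]
      simpa using hμ0 n
    filter_upwards [hann] with ω han
    have hb := rootBound a n ω hn han
    have habs : (0:ℝ) < ‖a n ω‖ := by
      exact norm_pos_iff.2 han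
    have hnpos : (0:ℝ) < (n:ℝ) := by
      have : 0 < n := hn
      exact_mod_cast this
    set M := maxRootMod (kacPoly a n ω) with hM
    have key : ‖a (n-1) ω‖ * ((n:ℝ)⁻¹ * (‖a n ω‖)⁻¹) ≤ M := by
      have h1 : ‖a (n-1) ω‖ / ((n:ℝ) * ‖a n ω‖) ≤ M := by
        rw [div_le_iff₀ (by positivity)]
        calc ‖a (n-1) ω‖ ≤ (n:ℝ) * ‖a n ω‖ * M := hb
          _ = M * ((n:ℝ) * ‖a n ω‖) := by ring
      rwa [div_eq_mul_inv, mul_inv] at h1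
    have hsq : (‖a (n-1) ω‖ * ((n:ℝ)⁻¹ * (‖a n ω‖)⁻¹)) ^ 2 ≤ M ^ 2 :=
      pow_le_pow_left₀ (by positivity) key 2
    calc X ω * Y ω
        = ENNReal.ofReal ((‖a (n-1) ω‖ *
            ((n:ℝ)⁻¹ * (‖a n ω‖)⁻¹)) ^ 2) := by
          rw [hX, hY, mul_pow, ← ENNReal.ofReal_mul (by positivity)]
      _ ≤ ENNReal.ofReal (M ^ 2) := ENNReal.ofReal_le_ofReal hsq
  -- conclude
  rw [eq_top_iff]
  calc (⊤:ℝ≥0∞) = (∫⁻ ω, X ω ∂μ) * ∫⁻ ω, Y ω ∂μ := by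
        rw [hYtop, ENNReal.mul_top hXpos]
    _ = ∫⁻ ω, X ω * Y ω ∂μ := hXY.symm
    _ ≤ ∫⁻ ω, ENNReal.ofReal (maxRootMod (kacPoly a n ω) ^ 2) ∂μ := lintegral_mono_ae hae
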